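/- Let g ≥ 1 and let Q be a polynomial over ℂ of degree 2g+1 whose derivative Q' has 2g pairwise distinct roots, and such that the values of Q at these roots (the critical values of Q) are pairwise distinct. If f : ℂ → ℂ is a bijection such that f and its inverse are infinitely differentiable (as maps of ℂ regarded as a real 2-dimensional space) and Q(f(x)) = Q(x) for every x ∈ ℂ, then f is the identity map. -/

import Mathlib

open Polynomial Metric Set Filter Bornology Topology

lemma aux_poly_bound (P : Polynomial ℂ) (m : ℕ) (hm : P.natDegree ≤ m) {z : ℂ} (hz : 1 ≤ ‖z‖) :
    ‖P.eval z‖ ≤ (∑ i ∈ Finset.range (m + 1), ‖P.coeff i‖) * ‖z‖ ^ m := by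
  rw [Polynomial.eval_eq_sum_range' (Nat.lt_succ_of_le hm)]
  calc ‖∑ i ∈ Finset.range (m + 1), P.coeff i * z ^ i‖
      ≤ ∑ i ∈ Finset.range (m + 1), ‖P.coeff i * z ^ i‖ := norm_sum_le _ _
    _ ≤ ∑ i ∈ Finset.range (m + 1), ‖P.coeff i‖ * ‖z‖ ^ m := by
        refine Finset.sum_le_sum fun i hi => ?_
        rw [norm_mul, norm_pow]
        exact mul_le_mul_of_nonneg_left
          (pow_le_pow_right₀ hz (Nat.lt_succ_iff.mp (Finset.mem_range.mp hi))) (norm_nonneg _)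
    _ = _ := by rw [Finset.sum_mul]

set_option maxHeartbeats 2000000 in
/-- If `Q` is a complex polynomial of degree `2g+1` (`g ≥ 1`) whose derivative
has `2g` pairwise distinct roots, at which the values of `Q` (the critical values) are
pairwise distinct, then any smooth diffeomorphism `f : ℂ → ℂ` (smooth with smooth inverse,
as a map of real 2-dimensional spaces) satisfying `Q ∘ f = Q` is the identity. -/
theorem stmt_0 (g : ℕ) (hg : 1 ≤ g) (Q : Polynomial ℂ)
    (hdeg : Q.natDegree = 2 * g + 1)
    (r : Fin (2 * g) → ℂ) (hr : Function.Injective r)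
    (hroot : ∀ i, (Polynomial.derivative Q).eval (r i) = 0)
    (hall : ∀ z : ℂ, (Polynomial.derivative Q).eval z = 0 → ∃ i, r i = z)
    (hcv : Function.Injective fun i => Q.eval (r i))
    (f : ℂ ≃ ℂ)
    (hf : ContDiff ℝ (⊤ : ℕ∞) (⇑f))
    (hf' : ContDiff ℝ (⊤ : ℕ∞) (⇑f.symm))
    (hQf : ∀ x : ℂ, Q.eval (f x) = Q.eval x) :
    ∀ x, f x = x := by
  classical
  have hfd : Differentiable ℝ (⇑f) := hf.differentiable (by simp)
  have hfd' : Differentiable ℝ (⇑f.symm) := hf'.differentiable (by simp)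
  have hfc : Continuous (⇑f) := hf.continuous
  -- Step A: critical points map to critical points
  have key : ∀ x : ℂ, (Polynomial.derivative Q).eval x = 0 →
      (Polynomial.derivative Q).eval (f x) = 0 := by
    intro x hx
    set M : ℂ →L[ℝ] ℂ := (ContinuousLinearMap.smulRight (1 : ℂ →L[ℂ] ℂ)
      ((derivative Q).eval (f x))).restrictScalars ℝ with hM
    have hQfx : HasFDerivAt (fun y => Q.eval y) M (f x) :=
      ((Q.hasDerivAt (f x)).hasFDerivAt).restrictScalars ℝ
    have hQx : HasFDerivAt (fun y => Q.eval y)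
        ((ContinuousLinearMap.smulRight (1 : ℂ →L[ℂ] ℂ)
          ((derivative Q).eval x)).restrictScalars ℝ) x :=
      ((Q.hasDerivAt x).hasFDerivAt).restrictScalars ℝ
    have hcomp : HasFDerivAt (fun y => Q.eval (f y)) (M.comp (fderiv ℝ (⇑f) x)) x :=
      hQfx.comp x (hfd x).hasFDerivAt
    have heq : (fun y => Q.eval (f y)) = fun y => Q.eval y := funext hQf
    rw [heq] at hcomp
    have huniq : M.comp (fderiv ℝ (⇑f) x) = (ContinuousLinearMap.smulRight (1 : ℂ →L[ℂ] ℂ)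
        ((derivative Q).eval x)).restrictScalars ℝ := hcomp.unique hQx
    rw [hx] at huniq
    have hzero : M.comp (fderiv ℝ (⇑f) x) = 0 := by
      rw [huniq]; ext v; simp
    have h0 : HasFDerivAt (⇑f) (fderiv ℝ (⇑f) x) (f.symm (f x)) := by
      rw [f.symm_apply_apply]; exact (hfd x).hasFDerivAt
    have h1 : HasFDerivAt (⇑f ∘ ⇑f.symm)
        ((fderiv ℝ (⇑f) x).comp (fderiv ℝ (⇑f.symm) (f x))) (f x) :=
      h0.comp (f x) (hfd' (f x)).hasFDerivAt
    have h2 : HasFDerivAt (⇑f ∘ ⇑f.symm) (ContinuousLinearMap.id ℝ ℂ) (f x) := by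
      have : (⇑f ∘ ⇑f.symm) = id := funext f.apply_symm_apply
      rw [this]; exact hasFDerivAt_id _
    have hinv : (fderiv ℝ (⇑f) x).comp (fderiv ℝ (⇑f.symm) (f x)) = ContinuousLinearMap.id ℝ ℂ :=
      h1.unique h2
    have hM0 : M = 0 := by
      have h3 : M.comp ((fderiv ℝ (⇑f) x).comp (fderiv ℝ (⇑f.symm) (f x))) = 0 := by
        rw [← ContinuousLinearMap.comp_assoc, hzero, ContinuousLinearMap.zero_comp]
      rwa [hinv, ContinuousLinearMap.comp_id] at h3
    have h4 : M 1 = 0 := by rw [hM0]; rfl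
    simpa [hM] using h4
  -- Step A2: f fixes each critical point
  have hfix : ∀ i, f (r i) = r i := by
    intro i
    obtain ⟨j, hj⟩ := hall (f (r i)) (key _ (hroot i))
    have h5 : Q.eval (r j) = Q.eval (r i) := by rw [hj, hQf]
    have hji : j = i := hcv h5
    rw [← hj, hji]
  -- converse of Step A
  have key2 : ∀ x : ℂ, (Polynomial.derivative Q).eval (f x) = 0 →
      (Polynomial.derivative Q).eval x = 0 := by
    intro x hx
    obtain ⟨j, hj⟩ := hall _ hx
    have h6 : f (r j) = f x := by rw [hfix j, hj]
    have h7 : r j = x := f.injective h6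
    rw [← h7]; exact hroot j
  -- Step B: f is holomorphic away from the critical set
  have hdiff_off : ∀ x₀ : ℂ, (Polynomial.derivative Q).eval x₀ ≠ 0 →
      DifferentiableAt ℂ (⇑f) x₀ := by
    intro x₀ hx₀
    have ha : (Polynomial.derivative Q).eval (f x₀) ≠ 0 := fun h => hx₀ (key2 x₀ h)
    have hQs : HasStrictDerivAt (fun y => Q.eval y) ((derivative Q).eval (f x₀)) (f x₀) :=
      Q.hasStrictDerivAt (f x₀)
    have h1 := hQs.hasStrictFDerivAt_equiv ha
    set φ := h1.localInverse _ _ _ with hφ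
    have hev : ∀ᶠ y in 𝓝 (f x₀), φ (Q.eval y) = y := h1.eventually_left_inverse
    have hev2 : ∀ᶠ x in 𝓝 x₀, φ (Q.eval (f x)) = f x := hfc.continuousAt.eventually hev
    have hev3 : (⇑f) =ᶠ[𝓝 x₀] fun x => φ (Q.eval x) := by
      filter_upwards [hev2] with x hx
      rw [← hQf x]; exact hx.symm
    have hφdiff : DifferentiableAt ℂ φ (Q.eval x₀) := by
      have h2 := h1.to_localInverse.differentiableAt
      rwa [hQf x₀] at h2
    exact (hφdiff.comp x₀ Q.differentiableAt).congr_of_eventuallyEq hev3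
  -- Step C: f is entire (removable singularities)
  have hSfin : {z : ℂ | (Polynomial.derivative Q).eval z = 0}.Finite :=
    (Set.finite_range r).subset fun z hz => by
      obtain ⟨i, hi⟩ := hall z hz; exact ⟨i, hi⟩
  have hent : Differentiable ℂ (⇑f) := by
    intro z
    by_cases hz : (Polynomial.derivative Q).eval z = 0
    · refine (Complex.analyticAt_of_differentiable_on_punctured_nhds_of_continuousAt ?_
        hfc.continuousAt).differentiableAt
      have hTc : ({z' : ℂ | (Polynomial.derivative Q).eval z' = 0} \ {z})ᶜ ∈ 𝓝 z :=
        ((hSfin.subset Set.diff_subset).isClosed.isOpen_compl).mem_nhds (by simp)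
      filter_upwards [nhdsWithin_le_nhds hTc, self_mem_nhdsWithin] with w hw hne
      exact hdiff_off w fun h0 => hw ⟨h0, hne⟩
    · exact hdiff_off z hz
  -- growth bounds for Q
  set lc := Q.leadingCoeff with hlcdef
  have hQ0 : Q ≠ 0 := fun h => by simp [h] at hdeg
  have hlc : lc ≠ 0 := Polynomial.leadingCoeff_ne_zero.mpr hQ0
  have hL : (0:ℝ) < ‖lc‖ := norm_pos_iff.mpr hlc
  set n := 2 * g + 1 with hn
  set E := Q.eraseLead with hEdef
  have hE : E + Polynomial.C lc * Polynomial.X ^ n = Q := by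
    rw [hEdef, hlcdef, ← hdeg]; exact Q.eraseLead_add_C_mul_X_pow
  have hEdeg : E.natDegree ≤ 2 * g := by
    rw [hEdef]
    have h := Q.eraseLead_natDegree_le
    omega
  set CE := ∑ i ∈ Finset.range (2 * g + 1), ‖E.coeff i‖ with hCEdef
  have hCE0 : 0 ≤ CE := Finset.sum_nonneg fun i _ => norm_nonneg _
  set CQ := ∑ i ∈ Finset.range (n + 1), ‖Q.coeff i‖ with hCQdef
  have hCQ0 : 0 ≤ CQ := Finset.sum_nonneg fun i _ => norm_nonneg _
  have hupper : ∀ z : ℂ, 1 ≤ ‖z‖ → ‖Q.eval z‖ ≤ CQ * ‖z‖ ^ n :=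
    fun z hz => aux_poly_bound Q n (le_of_eq hdeg) hz
  set R₀ : ℝ := max 1 (2 * CE / ‖lc‖ + 1) with hR₀def
  have hR₀1 : (1:ℝ) ≤ R₀ := le_max_left _ _
  have hlower : ∀ z : ℂ, R₀ ≤ ‖z‖ → ‖lc‖ / 2 * ‖z‖ ^ n ≤ ‖Q.eval z‖ := by
    intro z hz
    have hz1 : 1 ≤ ‖z‖ := le_trans hR₀1 hz
    have hz2 : 2 * CE / ‖lc‖ + 1 ≤ ‖z‖ := le_trans (le_max_right _ _) hz
    have hEb : ‖E.eval z‖ ≤ CE * ‖z‖ ^ (2 * g) := by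
      have := aux_poly_bound E (2 * g) hEdeg hz1
      simpa [hCEdef] using this
    have hfield : ‖lc‖ * (2 * CE / ‖lc‖) = 2 * CE := by
      rw [mul_comm]; exact div_mul_cancel₀ _ (ne_of_gt hL)
    have hCEz : CE ≤ ‖lc‖ / 2 * ‖z‖ := by nlinarith
    have hpow : ‖z‖ ^ n = ‖z‖ * ‖z‖ ^ (2 * g) := by
      rw [hn, pow_succ]; ring
    have hEb2 : ‖E.eval z‖ ≤ ‖lc‖ / 2 * ‖z‖ ^ n := by
      rw [hpow]
      calc ‖E.eval z‖ ≤ CE * ‖z‖ ^ (2 * g) := hEb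
        _ ≤ (‖lc‖ / 2 * ‖z‖) * ‖z‖ ^ (2 * g) :=
            mul_le_mul_of_nonneg_right hCEz (by positivity)
        _ = ‖lc‖ / 2 * (‖z‖ * ‖z‖ ^ (2 * g)) := by ring
    have hsum : ‖lc * z ^ n‖ ≤ ‖Q.eval z‖ + ‖E.eval z‖ := by
      have h11 : (lc : ℂ) * z ^ n = Q.eval z - E.eval z := by
        rw [← hE]; simp
      rw [h11]
      exact norm_sub_le _ _
    have hlcn : ‖lc * z ^ n‖ = ‖lc‖ * ‖z‖ ^ n := by
      rw [norm_mul, norm_pow]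
    nlinarith
  -- linear growth bound on f
  obtain ⟨A, B, hA1, hB1, hAB⟩ : ∃ A B : ℝ, 1 ≤ A ∧ 1 ≤ B ∧ ∀ z : ℂ, ‖f z‖ ≤ A + B * ‖z‖ := by
    set M : ℝ := max 1 (2 * CQ / ‖lc‖ + 1) with hMdef
    have hM1 : (1:ℝ) ≤ M := le_max_left _ _
    have hM2 : 2 * CQ / ‖lc‖ + 1 ≤ M := le_max_right _ _
    have hclaim : ∀ z : ℂ, 1 ≤ ‖z‖ → ‖f z‖ ≤ max R₀ (M * ‖z‖) := by
      intro z hz1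
      by_contra hcon
      push_neg at hcon
      rw [max_lt_iff] at hcon
      obtain ⟨hc1, hc2⟩ := hcon
      have hlow := hlower (f z) (le_of_lt hc1)
      rw [hQf z] at hlow
      have hup := hupper z hz1
      have hMz : M * ‖z‖ ≤ ‖f z‖ := le_of_lt hc2
      have hMz0 : 0 ≤ M * ‖z‖ := by positivity
      have hzn0 : (0:ℝ) ≤ ‖z‖ ^ n := by positivity
      have hzn : (1:ℝ) ≤ ‖z‖ ^ n := by
        simpa using pow_le_pow_left₀ (by norm_num) hz1 n
      have hMn : M * ‖z‖ ^ n ≤ ‖f z‖ ^ n := by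
        calc M * ‖z‖ ^ n ≤ M ^ n * ‖z‖ ^ n :=
              mul_le_mul_of_nonneg_right (le_self_pow₀ hM1 (by omega)) hzn0
          _ = (M * ‖z‖) ^ n := (mul_pow _ _ _).symm
          _ ≤ ‖f z‖ ^ n := pow_le_pow_left₀ hMz0 hMz n
      have hfield2 : ‖lc‖ * (2 * CQ / ‖lc‖) = 2 * CQ := by
        rw [mul_comm]; exact div_mul_cancel₀ _ (ne_of_gt hL)
      have hMcq : CQ + ‖lc‖ / 2 ≤ ‖lc‖ / 2 * M := by nlinarith
      have e1 : ‖lc‖ / 2 * (M * ‖z‖ ^ n) ≤ ‖lc‖ / 2 * ‖f z‖ ^ n :=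
        mul_le_mul_of_nonneg_left hMn (by positivity)
      have e2 : (CQ + ‖lc‖ / 2) * ‖z‖ ^ n ≤ (‖lc‖ / 2 * M) * ‖z‖ ^ n :=
        mul_le_mul_of_nonneg_right hMcq hzn0
      have e3 : ‖lc‖ / 2 ≤ ‖lc‖ / 2 * ‖z‖ ^ n := by nlinarith
      linarith
    obtain ⟨A₁, hA₁⟩ := (isCompact_closedBall (0:ℂ) 1).exists_bound_of_continuousOn
      hfc.continuousOn
    refine ⟨R₀ + max A₁ 0, M, by
      have := le_max_right A₁ (0:ℝ); linarith, hM1, fun z => ?_⟩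
    rcases le_or_gt 1 ‖z‖ with hz | hz
    · have h12 := hclaim z hz
      have h13 : max R₀ (M * ‖z‖) ≤ R₀ + M * ‖z‖ :=
        max_le (le_add_of_nonneg_right (by positivity)) (le_add_of_nonneg_left (by linarith))
      have h14 : 0 ≤ max A₁ 0 := le_max_right _ _
      linarith
    · have hz' : z ∈ closedBall (0:ℂ) 1 := by
        simpa [Metric.mem_closedBall, dist_zero_right] using le_of_lt hz
      have h15 := hA₁ z hz'
      have h16 : A₁ ≤ max A₁ 0 := le_max_left _ _
      have h17 : 0 ≤ M * ‖z‖ := by positivity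
      linarith
  -- derivative of f is bounded
  have hdb : ∀ c : ℂ, ‖deriv (⇑f) c‖ ≤ B := by
    intro c
    refine le_of_forall_pos_le_add fun ε hε => ?_
    set D : ℝ := A + B * ‖c‖ with hD
    have hBc : 0 ≤ B * ‖c‖ := by positivity
    have hD0 : 0 ≤ D := by rw [hD]; linarith
    set R : ℝ := (D + 1) / ε with hRdef
    have hR : 0 < R := by apply div_pos <;> linarith
    have hsp : ∀ z ∈ sphere c R, ‖f z‖ ≤ D + B * R := by
      intro z hz
      have hzc : dist z c = R := mem_sphere.mp hz
      have h8 : ‖z‖ ≤ ‖c‖ + R := by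
        have h18 := norm_sub_norm_le z c
        rw [dist_eq_norm] at hzc
        linarith
      calc ‖f z‖ ≤ A + B * ‖z‖ := hAB z
        _ ≤ A + B * (‖c‖ + R) := by nlinarith
        _ = D + B * R := by rw [hD]; ring
    have hest := Complex.norm_deriv_le_of_forall_mem_sphere_norm_le hR hent.diffContOnCl hsp
    have hεR : ε * R = D + 1 := by
      rw [hRdef]; field_simp
    calc ‖deriv (⇑f) c‖ ≤ (D + B * R) / R := hest
      _ ≤ B + ε := by rw [div_le_iff₀ hR]; nlinarith
  -- Liouville: deriv f is constant
  have hAOn : AnalyticOnNhd ℂ (⇑f) Set.univ := fun z _ => hent.analyticAt z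
  have hdd : Differentiable ℂ (deriv (⇑f)) := fun z =>
    (hAOn.deriv z (Set.mem_univ z)).differentiableAt
  have hbdd : IsBounded (Set.range (deriv (⇑f))) :=
    isBounded_iff_forall_norm_le.2 ⟨B, by rintro x ⟨c, rfl⟩; exact hdb c⟩
  have hconst := hdd.apply_eq_apply_of_bounded hbdd
  set a := deriv (⇑f) 0 with hadef
  have hda : ∀ z, deriv (⇑f) z = a := fun z => hconst z 0
  -- f z - a * z is constant
  have hFd : ∀ z : ℂ, HasDerivAt (fun w => f w - a * w) 0 z := by
    intro z
    have h1 : HasDerivAt (⇑f) (deriv (⇑f) z) z := (hent z).hasDerivAt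
    have h2 : HasDerivAt (fun w : ℂ => a * w) a z := by
      simpa using (hasDerivAt_id z).const_mul a
    have h3 := h1.sub h2
    rwa [hda z, sub_self] at h3
  have hFdiff : Differentiable ℂ (fun w => f w - a * w) := fun z => (hFd z).differentiableAt
  have hFderiv : ∀ z, deriv (fun w => f w - a * w) z = 0 := fun z => (hFd z).deriv
  have hFconst : ∀ z w : ℂ, f z - a * z = f w - a * w := fun z w =>
    is_const_of_deriv_eq_zero hFdiff hFderiv z w
  -- two distinct fixed points force a = 1 and the constant to be 0
  have hi0 : 0 < 2 * g := by omega
  have hi1 : 1 < 2 * g := by omega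
  have hne : r ⟨0, hi0⟩ ≠ r ⟨1, hi1⟩ := by
    intro h
    have h19 := hr h
    have h20 : (0 : ℕ) = 1 := congrArg Fin.val h19
    omega
  have hc01 := hFconst (r ⟨0, hi0⟩) (r ⟨1, hi1⟩)
  rw [hfix ⟨0, hi0⟩, hfix ⟨1, hi1⟩] at hc01
  have ha1 : a = 1 := by
    have h9 : (1 - a) * (r ⟨0, hi0⟩ - r ⟨1, hi1⟩) = 0 := by linear_combination hc01
    rcases mul_eq_zero.mp h9 with h | h
    · linear_combination -h
    · exact absurd (sub_eq_zero.mp h) hne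
  intro x
  have h10 := hFconst x (r ⟨0, hi0⟩)
  rw [hfix ⟨0, hi0⟩, ha1] at h10
  linear_combination h10
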